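/- Let V = 𝔽₂^m and for x ∈ V let E_x be the complex matrix with rows and columns indexed by V whose (g,h)-entry is 2^{−m}(−1)^{x·(g+h)}. Let a, b, c, d ∈ V with a ≠ b and c ≠ d. Then the states e_a − e_b and e_c − e_d are strongly cospectral, i.e., for every x ∈ V one has E_x(e_a − e_b) = E_x(e_c − e_d) or E_x(e_a − e_b) = −E_x(e_c − e_d), if and only if a + b + c + d = 0. -/
import Mathlib


open Matrix Finset

noncomputable section

/-- The standard basis vector `e_a` of `ℂ^V`. -/
def stdBasis {G : Type*} [DecidableEq G] (a : G) : G → ℂ :=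
  fun v => if v = a then 1 else 0

/-- The spectral projection-type matrix `E_x` with `(g,h)`-entry `2^{-m} (-1)^{x·(g+h)}`. -/
def Emat {m : ℕ} (x : Fin m → ZMod 2) :
    Matrix (Fin m → ZMod 2) (Fin m → ZMod 2) ℂ :=
  fun g h => (1 / 2 ^ m : ℂ) * (-1 : ℂ) ^ (x ⬝ᵥ (g + h)).val

lemma zmod_cases' (u : ZMod 2) : u = 0 ∨ u = 1 := by revert u; decide

lemma npow_add' (u v : ZMod 2) : (-1:ℂ)^(u+v).val = (-1)^u.val * (-1)^v.val := by
  rcases zmod_cases' u with h | h <;> rcases zmod_cases' v with h' | h' <;>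
    subst h <;> subst h' <;>
    norm_num [show (ZMod.val (2:ZMod 2)) = 0 from rfl, ZMod.val_one, ZMod.val_zero]

lemma zmod_iff' (u v p q : ZMod 2) :
    ((-1:ℂ)^u.val - (-1)^v.val = (-1:ℂ)^p.val - (-1)^q.val ∨
     (-1:ℂ)^u.val - (-1)^v.val = -((-1:ℂ)^p.val - (-1)^q.val)) ↔ u + v = p + q := by
  rcases zmod_cases' u with h | h <;> subst h <;>
  rcases zmod_cases' v with h | h <;> subst h <;>
  rcases zmod_cases' p with h | h <;> subst h <;>
  rcases zmod_cases' q with h | h <;> subst h <;>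
    (try norm_num [ZMod.val_one, ZMod.val_zero]) <;> decide

lemma mulVec_pair' {m : ℕ} (x a b g : Fin m → ZMod 2) :
    (Emat x *ᵥ (stdBasis a - stdBasis b)) g
      = (1/2^m : ℂ) * (-1:ℂ)^(x ⬝ᵥ g).val *
        ((-1:ℂ)^(x ⬝ᵥ a).val - (-1:ℂ)^(x ⬝ᵥ b).val) := by
  rw [mulVec_sub]
  have h1 : ∀ e : Fin m → ZMod 2, (Emat x *ᵥ stdBasis e) g = Emat x g e := by
    intro e
    simp [mulVec, dotProduct, _root_.stdBasis, mul_ite, mul_one, mul_zero]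
  simp only [Pi.sub_apply, h1, Emat, dotProduct_add, npow_add']
  ring

/-- `e_a - e_b` and `e_c - e_d` are strongly cospectral iff `a + b + c + d = 0`. -/
theorem strongly_cospectral_iff {m : ℕ} (hm : 1 ≤ m)
    (a b c d : Fin m → ZMod 2) (hab : a ≠ b) (hcd : c ≠ d) :
    (∀ x : Fin m → ZMod 2,
        Emat x *ᵥ (stdBasis a - stdBasis b) = Emat x *ᵥ (stdBasis c - stdBasis d) ∨
        Emat x *ᵥ (stdBasis a - stdBasis b) = -(Emat x *ᵥ (stdBasis c - stdBasis d))) ↔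
      a + b + c + d = 0 := by
  have hne : (1/2^m : ℂ) ≠ 0 := one_div_ne_zero (pow_ne_zero _ two_ne_zero)
  have cond_iff : ∀ x : Fin m → ZMod 2,
      (Emat x *ᵥ (stdBasis a - stdBasis b) = Emat x *ᵥ (stdBasis c - stdBasis d) ∨
        Emat x *ᵥ (stdBasis a - stdBasis b) = -(Emat x *ᵥ (stdBasis c - stdBasis d))) ↔
      x ⬝ᵥ a + x ⬝ᵥ b = x ⬝ᵥ c + x ⬝ᵥ d := by
    intro x
    rw [← zmod_iff']
    constructor
    · rintro (h | h)
      · left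
        have h0 := congrFun h 0
        rw [mulVec_pair', mulVec_pair'] at h0
        simp only [dotProduct_zero, ZMod.val_zero, pow_zero, mul_one] at h0
        exact mul_left_cancel₀ hne h0
      · right
        have h0 := congrFun h 0
        rw [Pi.neg_apply, mulVec_pair', mulVec_pair'] at h0
        simp only [dotProduct_zero, ZMod.val_zero, pow_zero, mul_one, ← mul_neg] at h0
        exact mul_left_cancel₀ hne h0
    · rintro (h | h)
      · left
        funext g
        rw [mulVec_pair', mulVec_pair', h]
      · right
        funext g
        rw [Pi.neg_apply, mulVec_pair', mulVec_pair', h]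
        ring
  constructor
  · intro H
    funext j
    have h2 := (cond_iff (Pi.single j 1)).mp (H (Pi.single j 1))
    simp only [single_dotProduct, one_mul] at h2
    simp only [Pi.add_apply, Pi.zero_apply]
    revert h2
    generalize a j = u
    generalize b j = v
    generalize c j = p
    generalize d j = q
    revert u v p q
    decide
  · intro H x
    apply (cond_iff x).mpr
    have h0 := congrArg (fun w => x ⬝ᵥ w) H
    simp only [dotProduct_add, dotProduct_zero] at h0
    revert h0
    generalize x ⬝ᵥ a = u
    generalize x ⬝ᵥ b = v
    generalize x ⬝ᵥ c = p
    generalize x ⬝ᵥ d = q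
    revert u v p q
    decide

end
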